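/- Assumptions and notation as in the Section 4 construction: (W,S) is an irreducible Coxeter system of finite rank with m_{st} < ∞ for all s,t ∈ S, whose Coxeter graph G is not a tree, with fixed s_1, s_2 ∈ S such that m := m_{s_1s_2} ≥ 4; p : G′ → G is the universal covering with fixed edge {s_1′, s_2′} over {s_1, s_2}, and V = ⊕_{a∈S′} ℂ α_a is the resulting representation of W. Let V_0 := {v ∈ V : s·v = v for all s ∈ S}. If m > 4 and v ∈ V ∖ V_0, then the W-subrepresentation of V generated by v is all of V. -/

import Mathlib

/-- The Coxeter graph of a Coxeter matrix `M`: two distinct vertices `s, t` are adjacent iff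
`M s t ≥ 3` or `M s t = ∞` (encoded as `0` in Mathlib), i.e. iff `M s t ≠ 2`. -/
def coxeterGraph {B : Type*} (M : CoxeterMatrix B) : SimpleGraph B where
  Adj s t := s ≠ t ∧ M s t ≠ 2
  symm := by
    constructor
    intro s t h
    exact ⟨h.1.symm, by rw [M.symmetric]; exact h.2⟩
  loopless := by constructor; intro s h; exact h.1 rfl

open Finsupp Classical in
/-- The Section 4 operators: for each `s ∈ S`, a linear operator on `V = ⊕_{a ∈ S′} ℂ α_a`,
where `S′` is the vertex set of the universal covering `p : G′ → G` of the Coxeter graph `G`,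
and `α_a = Finsupp.single a 1`.  Here `{s₁′, s₂′}` is the fixed edge of `G′` over the edge
`{s₁, s₂}` of `G` (with `m = m_{s₁s₂} ≥ 4`).  The defining formulas are:
(i) if `p a = s` then `s·α_a = −α_a`;
(ii) `s₁·α_{s₂′} = α_{s₂′} + 2cos(2π/m) α_{s₁′}` and `s₂·α_{s₁′} = α_{s₁′} + 2cos(2π/m) α_{s₂′}`;
(iii) otherwise, if `s` is not adjacent to `p a` in `G` (equivalently, under the covering
hypotheses, `a` has no neighbour in `G′` lying over `s`), then `s·α_a = α_a`;
(iv) otherwise `s·α_a = α_a + 2cos(π/m_{s,p(a)}) α_b`, where `b` is the unique neighbour of `a`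
in `G′` with `p b = s`. -/
noncomputable def sec4Act {B B' : Type*} (M : CoxeterMatrix B) (G' : SimpleGraph B')
    (p : B' → B) (s₁ s₂ : B) (s₁' s₂' : B') (s : B) : (B' →₀ ℂ) →ₗ[ℂ] (B' →₀ ℂ) :=
  Finsupp.lift _ ℂ _ fun a =>
    if p a = s then -single a 1
    else if s = s₁ ∧ a = s₂' then
      single s₂' 1 + (2 * Real.cos (2 * Real.pi / (M s₁ s₂ : ℝ)) : ℂ) • single s₁' 1
    else if s = s₂ ∧ a = s₁' then
      single s₁' 1 + (2 * Real.cos (2 * Real.pi / (M s₁ s₂ : ℝ)) : ℂ) • single s₂' 1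
    else if h : ∃ b, G'.Adj a b ∧ p b = s then
      single a 1 + (2 * Real.cos (Real.pi / (M s (p a) : ℝ)) : ℂ) • single h.choose 1
    else single a 1

open Finsupp Classical


open Classical in
noncomputable def sec4Coeff {B B' : Type*} (M : CoxeterMatrix B) (p : B' → B)
    (s₁ s₂ : B) (s₁' s₂' : B') (a b : B') : ℂ :=
  if (a = s₂' ∧ b = s₁') ∨ (a = s₁' ∧ b = s₂') then
    (2 * Real.cos (2 * Real.pi / (M s₁ s₂ : ℝ)) : ℂ)
  else (2 * Real.cos (Real.pi / (M (p b) (p a) : ℝ)) : ℂ)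

lemma two_cos_pos_of_three_le (n : ℕ) (hn : 3 ≤ n) : 0 < 2 * Real.cos (Real.pi / n) := by
  have hpi := Real.pi_pos
  have hn' : (3:ℝ) ≤ n := by exact_mod_cast hn
  have h1 : Real.pi / n ≤ Real.pi / 3 := by
    apply div_le_div_of_nonneg_left (le_of_lt hpi) (by norm_num) hn'
  have h2 : 0 < Real.pi / n := by positivity
  have : 0 < Real.cos (Real.pi / n) := by
    apply Real.cos_pos_of_mem_Ioo
    constructor <;> [linarith; linarith]
  linarith

lemma two_cos_two_pos_of_five_le (m : ℕ) (hm : 5 ≤ m) :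
    0 < 2 * Real.cos (2 * Real.pi / m) := by
  have hpi := Real.pi_pos
  have hm' : (5:ℝ) ≤ m := by exact_mod_cast hm
  have h1 : 2 * Real.pi / m ≤ 2 * Real.pi / 5 := by
    apply div_le_div_of_nonneg_left (by linarith) (by norm_num) hm'
  have h2 : 0 < 2 * Real.pi / m := by positivity
  have : 0 < Real.cos (2 * Real.pi / m) := by
    apply Real.cos_pos_of_mem_Ioo
    constructor <;> [linarith; linarith]
  linarith

lemma two_cos_lt (m : ℕ) (hm : 5 ≤ m) :
    2 * Real.cos (2 * Real.pi / m) < 2 * Real.cos (Real.pi / m) := by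
  have hpi := Real.pi_pos
  have hm' : (5:ℝ) ≤ m := by exact_mod_cast hm
  have h1 : Real.cos (2 * Real.pi / m) < Real.cos (Real.pi / m) := by
    apply Real.cos_lt_cos_of_nonneg_of_le_pi (by positivity)
    · rw [div_le_iff₀ (by linarith)]
      nlinarith
    · rw [div_lt_div_iff₀ (by linarith) (by linarith)]
      nlinarith
  linarith

section Aux
variable {B B' : Type*} (M : CoxeterMatrix B) (G' : SimpleGraph B') (p : B' → B)
  (s₁ s₂ : B) (s₁' s₂' : B')

lemma sum_single_apply_eq {A : Finset B'} (f : B' → ℂ) (g : B' → B')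
    (hg : Set.InjOn g A) {x₀ : B'} (hx₀ : x₀ ∈ A) :
    (∑ x ∈ A, f x • single (g x) (1:ℂ)) (g x₀) = f x₀ := by
  rw [Finsupp.finset_sum_apply]
  rw [Finset.sum_eq_single_of_mem x₀ hx₀]
  · simp
  · intro x hx hne
    have : g x ≠ g x₀ := fun h => hne (hg hx hx₀ h)
    simp [Finsupp.single_apply, this]

lemma sum_single_apply_ne {A : Finset B'} (f : B' → ℂ) (g : B' → B')
    {z : B'} (hz : ∀ x ∈ A, g x ≠ z) :
    (∑ x ∈ A, f x • single (g x) (1:ℂ)) z = 0 := by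
  rw [Finsupp.finset_sum_apply]
  apply Finset.sum_eq_zero
  intro x hx
  simp [Finsupp.single_apply, hz x hx]

lemma sec4Act_single (s : B) (a : B') :
    sec4Act M G' p s₁ s₂ s₁' s₂' s (single a (1:ℂ)) =
    (if p a = s then -single a 1
    else if s = s₁ ∧ a = s₂' then
      single s₂' 1 + (2 * Real.cos (2 * Real.pi / (M s₁ s₂ : ℝ)) : ℂ) • single s₁' 1
    else if s = s₂ ∧ a = s₁' then
      single s₁' 1 + (2 * Real.cos (2 * Real.pi / (M s₁ s₂ : ℝ)) : ℂ) • single s₂' 1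
    else if h : ∃ b, G'.Adj a b ∧ p b = s then
      single a 1 + (2 * Real.cos (Real.pi / (M s (p a) : ℝ)) : ℂ) • single h.choose 1
    else single a 1) := by
  simp [sec4Act, Finsupp.lift_apply, Finsupp.sum_single_index]

variable (hcover : ∀ a : B', Set.BijOn p (G'.neighborSet a) ((coxeterGraph M).neighborSet (p a)))

include hcover in
lemma nbr_unique {a b b' : B'} (hb : G'.Adj a b) (hb' : G'.Adj a b') (hpb : p b = p b') :
    b = b' := (hcover a).injOn hb hb' hpb

include hcover in
lemma nbr_unique' {a a' b : B'} (hb : G'.Adj a b) (hb' : G'.Adj a' b) (hpb : p a = p a') :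
    a = a' := (hcover b).injOn hb.symm hb'.symm hpb

variable (hmorph : ∀ a b : B', G'.Adj a b → (coxeterGraph M).Adj (p a) (p b))
  (hedge : G'.Adj s₁' s₂') (hp₁ : p s₁' = s₁) (hp₂ : p s₂' = s₂)

include hmorph hcover hedge hp₁ hp₂ in
lemma sec4Act_single_adj {a b : B'} (hab : G'.Adj a b) :
    sec4Act M G' p s₁ s₂ s₁' s₂' (p b) (single a (1:ℂ)) =
      single a 1 + sec4Coeff M p s₁ s₂ s₁' s₂' a b • single b 1 := by
  have hne : ¬ (p a = p b) := (hmorph a b hab).ne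
  rw [sec4Act_single, if_neg hne]
  by_cases h2 : p b = s₁ ∧ a = s₂'
  · have hb1 : b = s₁' := by
      apply nbr_unique M G' p hcover hab (h2.2 ▸ hedge.symm)
      rw [hp₁, h2.1]
    rw [if_pos h2, sec4Coeff, if_pos (Or.inl ⟨h2.2, hb1⟩), h2.2, hb1]
  · rw [if_neg h2]
    by_cases h3 : p b = s₂ ∧ a = s₁'
    · have hb2 : b = s₂' := by
        apply nbr_unique M G' p hcover hab (h3.2 ▸ hedge)
        rw [hp₂, h3.1]
      rw [if_pos h3, sec4Coeff, if_pos (Or.inr ⟨h3.2, hb2⟩), h3.2, hb2]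
    · rw [if_neg h3]
      have h : ∃ b', G'.Adj a b' ∧ p b' = p b := ⟨b, hab, rfl⟩
      rw [dif_pos h]
      have hc : h.choose = b :=
        nbr_unique M G' p hcover h.choose_spec.1 hab h.choose_spec.2
      rw [hc, sec4Coeff, if_neg]
      rintro (⟨ha, hb⟩ | ⟨ha, hb⟩)
      · exact h2 ⟨by rw [hb, hp₁], ha⟩
      · exact h3 ⟨by rw [hb, hp₂], ha⟩

variable (hfin : ∀ s t : B, M s t ≠ 0)

include hfin hmorph in
lemma sec4Coeff_ne_zero (hm5 : 4 < M s₁ s₂) {a b : B'} (hab : G'.Adj a b) :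
    sec4Coeff M p s₁ s₂ s₁' s₂' a b ≠ 0 := by
  have hadj := hmorph a b hab
  rw [sec4Coeff]
  split_ifs with h
  · have : 0 < 2 * Real.cos (2 * Real.pi / (M s₁ s₂ : ℝ)) :=
      two_cos_two_pos_of_five_le _ (by omega)
    exact_mod_cast ne_of_gt this
  · have h3 : 3 ≤ M (p b) (p a) := by
      have h0 := hfin (p b) (p a)
      have h1 := M.off_diagonal _ _ hadj.ne.symm
      have h2 : M (p b) (p a) ≠ 2 := by rw [M.symmetric]; exact hadj.2
      omega
    have : 0 < 2 * Real.cos (Real.pi / (M (p b) (p a) : ℝ)) :=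
      two_cos_pos_of_three_le _ h3
    exact_mod_cast ne_of_gt this

include hp₁ hp₂ in
lemma sec4Act_apply_offfiber (s : B) (u : B' →₀ ℂ) (x : B') (hx : p x ≠ s) :
    (sec4Act M G' p s₁ s₂ s₁' s₂' s u) x = u x := by
  induction u using Finsupp.induction_linear with
  | zero => simp
  | add f g hf hg => rw [map_add, Finsupp.add_apply, hf, hg, Finsupp.add_apply]
  | single a c =>
    have hrepr : single a c = c • single a (1:ℂ) := by
      rw [smul_single, smul_eq_mul, mul_one]
    rw [hrepr, map_smul, Finsupp.smul_apply, Finsupp.smul_apply]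
    congr 1
    rw [sec4Act_single]
    split_ifs with h1 h2 h3 h4
    · have : x ≠ a := fun h => hx (h ▸ h1)
      simp [Finsupp.single_apply, Ne.symm this]
    · have hx1 : x ≠ s₁' := fun h => hx (by rw [h, hp₁, ← h2.1])
      rw [Finsupp.add_apply, Finsupp.smul_apply, h2.2,
        Finsupp.single_eq_of_ne hx1]
      simp
    · have hx2 : x ≠ s₂' := fun h => hx (by rw [h, hp₂, ← h3.1])
      rw [Finsupp.add_apply, Finsupp.smul_apply, h3.2,
        Finsupp.single_eq_of_ne hx2]
      simp
    · have hxc : x ≠ h4.choose := fun h => hx (h ▸ h4.choose_spec.2)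
      rw [Finsupp.add_apply, Finsupp.smul_apply,
        Finsupp.single_eq_of_ne hxc]
      simp
    · rfl

include hmorph hcover hedge hp₁ hp₂ in
lemma step_sum (u : B' →₀ ℂ) (t' : B) (nb : B' → B')
    (hnb : ∀ x ∈ u.support, G'.Adj x (nb x) ∧ p (nb x) = t') :
    sec4Act M G' p s₁ s₂ s₁' s₂' t' u =
      u + ∑ x ∈ u.support, (u x * sec4Coeff M p s₁ s₂ s₁' s₂' x (nb x)) • single (nb x) 1 := by
  have hrepr : u = ∑ x ∈ u.support, u x • single x (1:ℂ) := by
    conv_lhs => rw [← Finsupp.sum_single u]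
    rw [Finsupp.sum]
    apply Finset.sum_congr rfl
    intro x _
    rw [smul_single, smul_eq_mul, mul_one]
  conv_lhs => rw [hrepr]
  rw [map_sum]
  have hterm : ∀ x ∈ u.support,
      sec4Act M G' p s₁ s₂ s₁' s₂' t' (u x • single x (1:ℂ)) =
      u x • single x (1:ℂ) + (u x * sec4Coeff M p s₁ s₂ s₁' s₂' x (nb x)) • single (nb x) 1 := by
    intro x hx
    rw [map_smul]
    rw [show t' = p (nb x) from (hnb x hx).2.symm,
      sec4Act_single_adj M G' p s₁ s₂ s₁' s₂' hcover hmorph hedge hp₁ hp₂ (hnb x hx).1]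
    rw [smul_add, smul_smul]
  rw [Finset.sum_congr rfl hterm, Finset.sum_add_distrib, ← hrepr]


include hmorph hcover hedge hp₁ hp₂ hfin in
lemma transport (hm5 : 4 < M s₁ s₂) (U : Submodule ℂ (B' →₀ ℂ))
    (hU : ∀ s u, u ∈ U → sec4Act M G' p s₁ s₂ s₁' s₂' s u ∈ U)
    (a x : B') (w : G'.Walk a x) :
    ∀ u : B' →₀ ℂ, u ∈ U → u a ≠ 0 → (∀ y ∈ u.support, p y = p a) →
    ∃ u' : B' →₀ ℂ, u' ∈ U ∧ u' x ≠ 0 ∧ (∀ y ∈ u'.support, p y = p x) := by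
  induction w with
  | nil => exact fun u hu ha hsupp => ⟨u, hu, ha, hsupp⟩
  | @cons a b x hab w ih =>
    intro u hu ha hsupp
    have hex : ∀ y, ∃ z, G'.Adj y z ∧ p z = p b ∨ True := fun y => ⟨y, Or.inr trivial⟩
    -- define the neighbour-choice map
    let nb : B' → B' := fun y =>
      if hy : ∃ z, G'.Adj y z ∧ p z = p b then hy.choose else y
    have hnb : ∀ y ∈ u.support, G'.Adj y (nb y) ∧ p (nb y) = p b := by
      intro y hy
      have hadj : (coxeterGraph M).Adj (p y) (p b) := by
        rw [hsupp y hy]; exact hmorph a b hab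
      have : ∃ z, G'.Adj y z ∧ p z = p b := by
        obtain ⟨z, hz, hpz⟩ := (hcover y).surjOn hadj
        exact ⟨z, hz, hpz⟩
      simp only [nb, dif_pos this]
      exact this.choose_spec
    have hinj : Set.InjOn nb u.support := by
      intro y hy y' hy' hee
      apply nbr_unique' M G' p hcover (hnb y hy).1 (hee ▸ (hnb y' hy').1)
      rw [hsupp y hy, hsupp y' hy']
    set w' : B' →₀ ℂ :=
      ∑ z ∈ u.support, (u z * sec4Coeff M p s₁ s₂ s₁' s₂' z (nb z)) • single (nb z) 1 with hw'
    have hstep := step_sum M G' p s₁ s₂ s₁' s₂' hcover hmorph hedge hp₁ hp₂ u (p b) nb hnb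
    have hw'U : w' ∈ U := by
      have h1 : sec4Act M G' p s₁ s₂ s₁' s₂' (p b) u ∈ U := hU _ _ hu
      have : w' = sec4Act M G' p s₁ s₂ s₁' s₂' (p b) u - u := by rw [hstep]; abel
      rw [this]; exact Submodule.sub_mem U h1 hu
    have hamem : a ∈ u.support := Finsupp.mem_support_iff.2 ha
    have hnba : nb a = b :=
      nbr_unique M G' p hcover (hnb a hamem).1 hab (hnb a hamem).2
    have hb0 : w' b ≠ 0 := by
      rw [← hnba, hw', sum_single_apply_eq _ _ hinj hamem]
      exact mul_ne_zero ha
        (sec4Coeff_ne_zero M G' p s₁ s₂ s₁' s₂' hmorph hfin hm5 (hnb a hamem).1)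
    have hsupp' : ∀ y ∈ w'.support, p y = p b := by
      intro y hy
      by_contra hne
      apply Finsupp.mem_support_iff.1 hy
      rw [hw']
      apply sum_single_apply_ne
      intro z hz heq
      exact hne (heq ▸ (hnb z hz).2)
    exact ih w' hw'U hb0 hsupp'


include hmorph hcover hedge hp₁ hp₂ hfin in
lemma roundtrip (hm5 : 4 < M s₁ s₂) (U : Submodule ℂ (B' →₀ ℂ))
    (hU : ∀ s u, u ∈ U → sec4Act M G' p s₁ s₂ s₁' s₂' s u ∈ U)
    (u : B' →₀ ℂ) (hu : u ∈ U) (h1 : u s₁' ≠ 0)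
    (hsupp : ∀ y ∈ u.support, p y = s₁) :
    single s₁' (1:ℂ) ∈ U := by
  classical
  set cc : ℂ := (2 * Real.cos (2 * Real.pi / (M s₁ s₂ : ℝ)) : ℂ) with hcc
  set γ : ℂ := (2 * Real.cos (Real.pi / (M s₁ s₂ : ℝ)) : ℂ) with hγ
  have hss : s₁ ≠ s₂ := by
    intro h
    rw [h] at hm5
    have := M.diagonal s₂
    omega
  -- choice of neighbours over s₂
  let nb : B' → B' := fun y =>
    if hy : ∃ z, G'.Adj y z ∧ p z = s₂ then hy.choose else y
  have hnb : ∀ y ∈ u.support, G'.Adj y (nb y) ∧ p (nb y) = s₂ := by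
    intro y hy
    have hadj : (coxeterGraph M).Adj (p y) s₂ := by
      rw [hsupp y hy]; exact ⟨hss, by omega⟩
    have hex : ∃ z, G'.Adj y z ∧ p z = s₂ := by
      obtain ⟨z, hz, hpz⟩ := (hcover y).surjOn hadj
      exact ⟨z, hz, hpz⟩
    simp only [nb, dif_pos hex]
    exact hex.choose_spec
  have hs₁'mem : s₁' ∈ u.support := Finsupp.mem_support_iff.2 h1
  have hnbs₁' : nb s₁' = s₂' := by
    apply nbr_unique M G' p hcover (hnb s₁' hs₁'mem).1 hedge
    rw [(hnb s₁' hs₁'mem).2, hp₂]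
  -- first step
  set u₁ : B' →₀ ℂ :=
    ∑ z ∈ u.support, (u z * sec4Coeff M p s₁ s₂ s₁' s₂' z (nb z)) • single (nb z) 1 with hu₁
  have hstep := step_sum M G' p s₁ s₂ s₁' s₂' hcover hmorph hedge hp₁ hp₂ u s₂ nb hnb
  have hu₁U : u₁ ∈ U := by
    have : u₁ = sec4Act M G' p s₁ s₂ s₁' s₂' s₂ u - u := by rw [hstep]; abel
    rw [this]; exact Submodule.sub_mem U (hU _ _ hu) hu
  -- second step back
  have hback : sec4Act M G' p s₁ s₂ s₁' s₂' s₁ u₁ =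
      u₁ + ∑ z ∈ u.support,
        ((u z * sec4Coeff M p s₁ s₂ s₁' s₂' z (nb z)) *
          sec4Coeff M p s₁ s₂ s₁' s₂' (nb z) z) • single z 1 := by
    rw [hu₁, map_sum]
    have hterm : ∀ z ∈ u.support,
        sec4Act M G' p s₁ s₂ s₁' s₂' s₁
          ((u z * sec4Coeff M p s₁ s₂ s₁' s₂' z (nb z)) • single (nb z) (1:ℂ)) =
        (u z * sec4Coeff M p s₁ s₂ s₁' s₂' z (nb z)) • single (nb z) (1:ℂ) +
          ((u z * sec4Coeff M p s₁ s₂ s₁' s₂' z (nb z)) *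
            sec4Coeff M p s₁ s₂ s₁' s₂' (nb z) z) • single z 1 := by
      intro z hz
      have hstep2 := sec4Act_single_adj M G' p s₁ s₂ s₁' s₂' hcover hmorph hedge hp₁ hp₂
        (hnb z hz).1.symm
      rw [hsupp z hz] at hstep2
      rw [map_smul, hstep2, smul_add, smul_smul]
    rw [Finset.sum_congr rfl hterm, Finset.sum_add_distrib]
  set u₂ : B' →₀ ℂ := ∑ z ∈ u.support,
      ((u z * sec4Coeff M p s₁ s₂ s₁' s₂' z (nb z)) *
        sec4Coeff M p s₁ s₂ s₁' s₂' (nb z) z) • single z 1 with hu₂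
  have hu₂U : u₂ ∈ U := by
    have : u₂ = sec4Act M G' p s₁ s₂ s₁' s₂' s₁ u₁ - u₁ := by rw [hback]; abel
    rw [this]; exact Submodule.sub_mem U (hU _ _ hu₁U) hu₁U
  -- the coefficients
  have hcoef : ∀ z ∈ u.support,
      sec4Coeff M p s₁ s₂ s₁' s₂' z (nb z) * sec4Coeff M p s₁ s₂ s₁' s₂' (nb z) z =
      if z = s₁' then cc * cc else γ * γ := by
    intro z hz
    by_cases hzs : z = s₁'
    · subst hzs
      rw [hnbs₁', if_pos rfl]
      rw [sec4Coeff, if_pos (Or.inr ⟨rfl, rfl⟩), sec4Coeff, if_pos (Or.inl ⟨rfl, rfl⟩)]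
    · have hz1 : p z = s₁ := hsupp z hz
      have hnbz2 : p (nb z) = s₂ := (hnb z hz).2
      rw [if_neg hzs]
      have hA : sec4Coeff M p s₁ s₂ s₁' s₂' z (nb z) = γ := by
        rw [sec4Coeff, if_neg, hnbz2, hz1, M.symmetric s₂ s₁]
        rintro (⟨h, _⟩ | ⟨h, _⟩)
        · rw [h, hp₂] at hz1; exact hss hz1.symm
        · exact hzs h
      have hB : sec4Coeff M p s₁ s₂ s₁' s₂' (nb z) z = γ := by
        rw [sec4Coeff, if_neg, hz1, hnbz2]
        rintro (⟨_, h⟩ | ⟨h, _⟩)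
        · exact hzs h
        · rw [h, hp₁] at hnbz2; exact hss hnbz2
      rw [hA, hB]
  -- the element u₂ - (γ*γ) • u
  have hurepr : u = ∑ z ∈ u.support, u z • single z (1:ℂ) := by
    conv_lhs => rw [← Finsupp.sum_single u]
    rw [Finsupp.sum]
    apply Finset.sum_congr rfl
    intro z _
    rw [smul_single, smul_eq_mul, mul_one]
  set c : ℂ := (cc * cc - γ * γ) * u s₁' with hc
  have hsm : (γ * γ) • u = ∑ z ∈ u.support, ((γ * γ) * u z) • single z (1:ℂ) := by
    conv_lhs => rw [hurepr]
    rw [Finset.smul_sum]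
    exact Finset.sum_congr rfl fun z _ => by rw [smul_smul]
  have hz' : u₂ - (γ * γ) • u = c • single s₁' 1 := by
    rw [hu₂, hsm, ← Finset.sum_sub_distrib]
    have : ∀ z ∈ u.support,
        ((u z * sec4Coeff M p s₁ s₂ s₁' s₂' z (nb z)) *
          sec4Coeff M p s₁ s₂ s₁' s₂' (nb z) z) • single z (1:ℂ) -
        ((γ * γ) * u z) • single z 1 =
        (if z = s₁' then c else 0) • single z 1 := by
      intro z hz
      rw [← sub_smul, mul_assoc, hcoef z hz]
      by_cases hzs : z = s₁'
      · subst hzs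
        rw [if_pos rfl, if_pos rfl, hc]
        congr 1
        ring
      · rw [if_neg hzs, if_neg hzs, mul_comm (γ * γ) (u z), sub_self, zero_smul]
    rw [Finset.sum_congr rfl this,
      Finset.sum_eq_single_of_mem s₁' hs₁'mem (fun z _ hzs => by rw [if_neg hzs, zero_smul]),
      if_pos rfl]
  have hcne : c ≠ 0 := by
    apply mul_ne_zero _ h1
    rw [sub_ne_zero]
    have hr1 : 0 < 2 * Real.cos (2 * Real.pi / (M s₁ s₂ : ℝ)) :=
      two_cos_two_pos_of_five_le _ (by omega)
    have hr2 := two_cos_lt (M s₁ s₂) (by omega)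
    have : (2 * Real.cos (2 * Real.pi / (M s₁ s₂ : ℝ))) *
        (2 * Real.cos (2 * Real.pi / (M s₁ s₂ : ℝ))) ≠
        (2 * Real.cos (Real.pi / (M s₁ s₂ : ℝ))) *
        (2 * Real.cos (Real.pi / (M s₁ s₂ : ℝ))) := by nlinarith
    rw [hcc, hγ]
    exact_mod_cast this
  have hfinal : (c • single s₁' (1:ℂ)) ∈ U := by
    rw [← hz']
    exact Submodule.sub_mem U hu₂U (Submodule.smul_mem U _ hu)
  have := Submodule.smul_mem U c⁻¹ hfinal
  rwa [smul_smul, inv_mul_cancel₀ hcne, one_smul] at this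


include hmorph hcover hedge hp₁ hp₂ hfin in
lemma propagate (hm5 : 4 < M s₁ s₂) (U : Submodule ℂ (B' →₀ ℂ))
    (hU : ∀ s u, u ∈ U → sec4Act M G' p s₁ s₂ s₁' s₂' s u ∈ U)
    (a x : B') (w : G'.Walk a x) (ha : single a (1:ℂ) ∈ U) : single x 1 ∈ U := by
  induction w with
  | nil => exact ha
  | @cons a b x hab w ih =>
    apply ih
    have h := sec4Act_single_adj M G' p s₁ s₂ s₁' s₂' hcover hmorph hedge hp₁ hp₂ hab
    have h2 : sec4Coeff M p s₁ s₂ s₁' s₂' a b • single b (1:ℂ) ∈ U := by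
      have h1 := hU (p b) _ ha
      rw [h] at h1
      have h1' := Submodule.sub_mem U h1 ha
      rwa [add_sub_cancel_left] at h1'
    have h3 := Submodule.smul_mem U (sec4Coeff M p s₁ s₂ s₁' s₂' a b)⁻¹ h2
    rwa [smul_smul,
      inv_mul_cancel₀ (sec4Coeff_ne_zero M G' p s₁ s₂ s₁' s₂' hmorph hfin hm5 hab),
      one_smul] at h3

end Aux

/-- The subspace of vectors fixed by all the operators `σ s`. -/
def fixedSubmodule {B V : Type*} [AddCommGroup V] [Module ℂ V]
    (σ : B → V →ₗ[ℂ] V) : Submodule ℂ V where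
  carrier := {v | ∀ s, σ s v = v}
  add_mem' := by
    intro a b ha hb s
    simp [map_add, ha s, hb s]
  zero_mem' := by intro s; simp
  smul_mem' := by
    intro c a ha s
    simp [map_smul, ha s]

/-- under the Section 4 assumptions, with `ρ` the resulting representation of `W`
on `V = B' →₀ ℂ` and `V₀ = {v ∈ V : s·v = v for all s ∈ S}`: if `m = m_{s₁s₂} > 4` and
`v ∈ V ∖ V₀`, then the `W`-subrepresentation of `V` generated by `v` is all of `V`. -/
theorem statement6 {B B' W : Type*} [Group W] [Fintype B]
    (M : CoxeterMatrix B) (cs : CoxeterSystem M W)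
    (hfin : ∀ s t : B, M s t ≠ 0)
    (hconn : (coxeterGraph M).Connected)
    (hnottree : ¬ (coxeterGraph M).IsTree)
    (s₁ s₂ : B) (hm : 4 ≤ M s₁ s₂)
    (G' : SimpleGraph B') (htree : G'.IsTree) (p : B' → B)
    (hmorph : ∀ a b : B', G'.Adj a b → (coxeterGraph M).Adj (p a) (p b))
    (hsurj : Function.Surjective p)
    (hcover : ∀ a : B', Set.BijOn p (G'.neighborSet a) ((coxeterGraph M).neighborSet (p a)))
    (s₁' s₂' : B') (hedge : G'.Adj s₁' s₂') (hp₁ : p s₁' = s₁) (hp₂ : p s₂' = s₂)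
    (ρ : Representation ℂ W (B' →₀ ℂ))
    (hρ : ∀ s : B, ρ (cs.simple s) = sec4Act M G' p s₁ s₂ s₁' s₂' s)
    (hm4 : 4 < M s₁ s₂) :
    ∀ v : B' →₀ ℂ, v ∉ fixedSubmodule (sec4Act M G' p s₁ s₂ s₁' s₂') →
      Submodule.span ℂ {u | ∃ w : W, ρ w v = u} = ⊤ := by
  intro v hv
  set U : Submodule ℂ (B' →₀ ℂ) := Submodule.span ℂ {u | ∃ w : W, ρ w v = u} with hUdef
  have hU : ∀ s u, u ∈ U → sec4Act M G' p s₁ s₂ s₁' s₂' s u ∈ U := by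
    intro s u hu
    have hmap : Submodule.map (sec4Act M G' p s₁ s₂ s₁' s₂' s) U ≤ U := by
      rw [hUdef, Submodule.map_span]
      apply Submodule.span_le.2
      rintro _ ⟨o, ⟨w, rfl⟩, rfl⟩
      apply Submodule.subset_span
      exact ⟨cs.simple s * w, by rw [map_mul, hρ s]; rfl⟩
    exact hmap ⟨u, hu, rfl⟩
  have hvU : v ∈ U := Submodule.subset_span ⟨1, by rw [map_one]; rfl⟩
  have hv' : ¬ ∀ s, sec4Act M G' p s₁ s₂ s₁' s₂' s v = v := hv
  push_neg at hv'
  obtain ⟨s, hs⟩ := hv'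
  set u₀ : B' →₀ ℂ := sec4Act M G' p s₁ s₂ s₁' s₂' s v - v with hu₀def
  have hu₀U : u₀ ∈ U := Submodule.sub_mem U (hU s v hvU) hvU
  have hu₀ne : u₀ ≠ 0 := sub_ne_zero.2 hs
  have hsupp₀ : ∀ y ∈ u₀.support, p y = s := by
    intro y hy
    by_contra hne
    apply Finsupp.mem_support_iff.1 hy
    rw [hu₀def, Finsupp.sub_apply,
      sec4Act_apply_offfiber M G' p s₁ s₂ s₁' s₂' hp₁ hp₂ s v y hne, sub_self]
  obtain ⟨a', ha'⟩ := Finsupp.support_nonempty_iff.2 hu₀ne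
  obtain ⟨wk⟩ := htree.isConnected.preconnected a' s₁'
  obtain ⟨u', hu'U, hu's₁', hsupp'⟩ :=
    transport M G' p s₁ s₂ s₁' s₂' hcover hmorph hedge hp₁ hp₂ hfin hm4 U hU a' s₁' wk
      u₀ hu₀U (Finsupp.mem_support_iff.1 ha')
      (fun y hy => by rw [hsupp₀ y hy, hsupp₀ a' ha'])
  have hsupp'' : ∀ y ∈ u'.support, p y = s₁ := fun y hy => by
    rw [hsupp' y hy, hp₁]
  have hsingle : single s₁' (1:ℂ) ∈ U :=
    roundtrip M G' p s₁ s₂ s₁' s₂' hcover hmorph hedge hp₁ hp₂ hfin hm4 U hU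
      u' hu'U hu's₁' hsupp''
  have hall : ∀ x : B', single x (1:ℂ) ∈ U := by
    intro x
    obtain ⟨wk'⟩ := htree.isConnected.preconnected s₁' x
    exact propagate M G' p s₁ s₂ s₁' s₂' hcover hmorph hedge hp₁ hp₂ hfin hm4 U hU
      s₁' x wk' hsingle
  rw [Submodule.eq_top_iff']
  intro f
  induction f using Finsupp.induction with
  | zero => exact Submodule.zero_mem U
  | single_add a b f _ _ ih =>
    refine Submodule.add_mem U ?_ ih
    have := Submodule.smul_mem U b (hall a)
    rwa [smul_single, smul_eq_mul, mul_one] at this
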